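/- arXiv:1706.03175 — 2 statements merged into one kernel-verified Lean document; each statement's English description precedes it below -/
import Mathlib

section
/- With the notation of the orthogonal-case decomposition: writing A = (β_2−β_0)‖diag(P)‖² + β_0‖P‖_F², B_1 = 2(α_0α_2−α_0²)(diag(P)^⊤P·1 − ‖diag(P)‖²), B_2 = α_1²((diag(P)^⊤1)² − 2‖diag(P)‖² + ⟨P, P^⊤⟩), B_3 = α_0²(‖P·1‖² − ‖P‖_F²), one has the identity A + B_1 + B_2 + B_3 = ‖α_0 P·1 + (α_2−α_0)diag(P)‖² + α_1²(diag(P)^⊤1)² + (α_1²/2)‖P + P^⊤ − 2 diag(diag(P))‖_F² + (β_0−α_0²−α_1²)‖P − diag(diag(P))‖_F² + (β_2−α_1²−α_2²)‖diag(P)‖². -/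
open MeasureTheory ProbabilityTheory Real

noncomputable def euclNorm {ι : Type*} [Fintype ι] (v : ι → ℝ) : ℝ :=
  Real.sqrt (∑ i, (v i)^2)

noncomputable def specNorm {ι κ : Type*} [Fintype ι] [Fintype κ] (A : Matrix ι κ ℝ) : ℝ :=
  sSup {r : ℝ | ∃ x : κ → ℝ, euclNorm x = 1 ∧ r = euclNorm (A.mulVec x)}

noncomputable def sigmaMin {ι κ : Type*} [Fintype ι] [Fintype κ] (A : Matrix ι κ ℝ) : ℝ :=
  sInf {r : ℝ | ∃ x : κ → ℝ, euclNorm x = 1 ∧ r = euclNorm (A.mulVec x)}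

noncomputable def frobNorm {ι κ : Type*} [Fintype ι] [Fintype κ] (A : Matrix ι κ ℝ) : ℝ :=
  Real.sqrt (∑ i, ∑ j, (A i j)^2)

noncomputable def stdGaussian (d : ℕ) : Measure (Fin d → ℝ) :=
  Measure.pi fun _ => gaussianReal 0 1

/-- Exact algebraic identity `A + B₁ + B₂ + B₃ = C₁ + C₂ + C₃ + C₄ + C₅` used in the
orthogonal-case Hessian decomposition. -/
theorem stmt10 (k : ℕ) (P : Matrix (Fin k) (Fin k) ℝ) (α0 α1 α2 β0 β2 : ℝ) :
    ((β2 - β0) * (∑ i, (P i i) ^ 2) + β0 * (∑ i, ∑ j, (P i j) ^ 2))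
    + (2 * (α0 * α2 - α0 ^ 2) * ((∑ i, P i i * (∑ j, P i j)) - ∑ i, (P i i) ^ 2))
    + (α1 ^ 2 * ((∑ i, P i i) ^ 2 - 2 * (∑ i, (P i i) ^ 2) + ∑ i, ∑ j, P i j * P j i))
    + (α0 ^ 2 * ((∑ i, (∑ j, P i j) ^ 2) - ∑ i, ∑ j, (P i j) ^ 2))
    =
    (∑ i, (α0 * (∑ j, P i j) + (α2 - α0) * P i i) ^ 2)
    + α1 ^ 2 * (∑ i, P i i) ^ 2
    + (α1 ^ 2 / 2) * (∑ i, ∑ j, (P i j + P j i - (if i = j then 2 * P i i else 0)) ^ 2)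
    + (β0 - α0 ^ 2 - α1 ^ 2) * (∑ i, ∑ j, (if i = j then 0 else P i j) ^ 2)
    + (β2 - α1 ^ 2 - α2 ^ 2) * (∑ i, (P i i) ^ 2) := by
  have h1 : (∑ i, ∑ j, (if i = j then (0:ℝ) else P i j) ^ 2)
      = (∑ i, ∑ j, (P i j)^2) - ∑ i, (P i i)^2 := by
    rw [← Finset.sum_sub_distrib]
    refine Finset.sum_congr rfl fun i _ => ?_
    have : ∀ j, (if i = j then (0:ℝ) else P i j) ^ 2
        = (P i j)^2 - (if i = j then (P i j)^2 else 0) := by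
      intro j; split <;> ring
    simp only [this, Finset.sum_sub_distrib, Finset.sum_ite_eq, Finset.mem_univ, if_true]
  have h2 : (∑ i, ∑ j, (P i j + P j i - (if i = j then 2 * P i i else 0)) ^ 2)
      = 2 * (∑ i, ∑ j, (P i j)^2) + 2 * (∑ i, ∑ j, P i j * P j i) - 4 * ∑ i, (P i i)^2 := by
    have step : ∀ i j, (P i j + P j i - (if i = j then 2 * P i i else 0)) ^ 2
        = (P i j)^2 + 2 * (P i j * P j i) + (P j i)^2
          - (if i = j then 4 * (P i i)^2 else 0) := by
      intro i j; split_ifs with h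
      · subst h; ring
      · ring
    simp only [step, Finset.sum_sub_distrib, Finset.sum_add_distrib,
      Finset.sum_ite_eq, Finset.mem_univ, if_true]
    rw [Finset.sum_comm (f := fun i j => (P j i)^2)]
    simp only [← Finset.mul_sum]
    ring
  have h3 : (∑ i, (α0 * (∑ j, P i j) + (α2 - α0) * P i i) ^ 2)
      = α0^2 * (∑ i, (∑ j, P i j)^2) + 2 * α0 * (α2 - α0) * (∑ i, P i i * (∑ j, P i j))
        + (α2 - α0)^2 * ∑ i, (P i i)^2 := by
    rw [Finset.mul_sum, Finset.mul_sum, Finset.mul_sum, ← Finset.sum_add_distrib,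
      ← Finset.sum_add_distrib]
    refine Finset.sum_congr rfl fun i _ => ?_
    ring
  rw [h1, h2, h3]
  ring
end

section
/- Schur-product lower bound for the tensorized Gram matrix: Let U ∈ R^{k×k} and let A ∈ R^{k²×k} be the matrix whose i-th column is vec(u_i u_i^⊤) where u_i is the i-th column of U. Then σ_k(A) ≥ σ_k(U)² and ‖A‖ ≤ σ_1(U)². -/
open MeasureTheory ProbabilityTheory Real

lemma euclNorm_nonneg' {ι : Type*} [Fintype ι] (v : ι → ℝ) : 0 ≤ euclNorm v :=
  Real.sqrt_nonneg _

lemma euclNorm_sq' {ι : Type*} [Fintype ι] (v : ι → ℝ) : euclNorm v ^ 2 = ∑ i, (v i)^2 :=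
  Real.sq_sqrt (Finset.sum_nonneg fun _ _ => sq_nonneg _)

lemma euclNorm_zero' {ι : Type*} [Fintype ι] : euclNorm (0 : ι → ℝ) = 0 := by
  simp [euclNorm]

lemma euclNorm_smul' {ι : Type*} [Fintype ι] (c : ℝ) (v : ι → ℝ) :
    euclNorm (c • v) = |c| * euclNorm v := by
  simp only [euclNorm, Pi.smul_apply, smul_eq_mul, mul_pow, ← Finset.mul_sum]
  rw [Real.sqrt_mul (sq_nonneg c), Real.sqrt_sq_eq_abs]

lemma euclNorm_pos' {ι : Type*} [Fintype ι] {v : ι → ℝ} (hv : v ≠ 0) : 0 < euclNorm v := by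
  apply Real.sqrt_pos.mpr
  obtain ⟨i, hi⟩ := Function.ne_iff.mp hv
  exact Finset.sum_pos' (fun _ _ => sq_nonneg _) ⟨i, Finset.mem_univ i, pow_pos (abs_pos.mpr hi) 2 |> fun h => by simpa [sq_abs] using h⟩

lemma euclNorm_single' {ι : Type*} [Fintype ι] [DecidableEq ι] (j : ι) :
    euclNorm (Pi.single j 1 : ι → ℝ) = 1 := by
  have : ∑ i, ((Pi.single j (1:ℝ) : ι → ℝ) i)^2 = 1 := by
    rw [Finset.sum_eq_single j] <;> simp +contextual [Pi.single_apply]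
  rw [euclNorm, this, Real.sqrt_one]

lemma specSet_bddAbove {ι κ : Type*} [Fintype ι] [Fintype κ] (M : Matrix ι κ ℝ) :
    BddAbove {r : ℝ | ∃ x : κ → ℝ, euclNorm x = 1 ∧ r = euclNorm (M.mulVec x)} := by
  refine ⟨frobNorm M, ?_⟩
  rintro r ⟨x, hx, rfl⟩
  have hx2 : ∑ l, (x l)^2 = 1 := by rw [← euclNorm_sq', hx]; norm_num
  have key : ∑ i, (M.mulVec x i)^2 ≤ ∑ i, ∑ j, (M i j)^2 := by
    apply Finset.sum_le_sum
    intro i _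
    calc (M.mulVec x i)^2 = (∑ j, M i j * x j)^2 := by rfl
      _ ≤ (∑ j, (M i j)^2) * ∑ j, (x j)^2 := Finset.sum_mul_sq_le_sq_mul_sq _ _ _
      _ = ∑ j, (M i j)^2 := by rw [hx2, mul_one]
  exact Real.sqrt_le_sqrt key

lemma mulVec_le_specNorm {ι κ : Type*} [Fintype ι] [Fintype κ] (M : Matrix ι κ ℝ) (v : κ → ℝ) :
    euclNorm (M.mulVec v) ≤ specNorm M * euclNorm v := by
  by_cases hv : v = 0
  · simp [hv, Matrix.mulVec_zero, euclNorm_zero']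
  · have hc : 0 < euclNorm v := euclNorm_pos' hv
    set c := euclNorm v with hcdef
    have hunit : euclNorm (c⁻¹ • v) = 1 := by
      rw [euclNorm_smul', abs_of_pos (inv_pos.mpr hc), inv_mul_cancel₀ hc.ne']
    have hmem : euclNorm (M.mulVec (c⁻¹ • v)) ∈
        {r : ℝ | ∃ x : κ → ℝ, euclNorm x = 1 ∧ r = euclNorm (M.mulVec x)} :=
      ⟨c⁻¹ • v, hunit, rfl⟩
    have hle := le_csSup (specSet_bddAbove M) hmem
    have heq : euclNorm (M.mulVec (c⁻¹ • v)) = c⁻¹ * euclNorm (M.mulVec v) := by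
      rw [Matrix.mulVec_smul, euclNorm_smul', abs_of_pos (inv_pos.mpr hc)]
    rw [heq] at hle
    calc euclNorm (M.mulVec v) = c * (c⁻¹ * euclNorm (M.mulVec v)) := by
          field_simp
      _ ≤ c * specNorm M := by
          apply mul_le_mul_of_nonneg_left hle hc.le
      _ = specNorm M * c := mul_comm _ _

lemma sigmaMin_le_mulVec {ι κ : Type*} [Fintype ι] [Fintype κ] (M : Matrix ι κ ℝ) (v : κ → ℝ) :
    sigmaMin M * euclNorm v ≤ euclNorm (M.mulVec v) := by
  by_cases hv : v = 0
  · simp [hv, Matrix.mulVec_zero, euclNorm_zero']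
  · have hc : 0 < euclNorm v := euclNorm_pos' hv
    set c := euclNorm v with hcdef
    have hunit : euclNorm (c⁻¹ • v) = 1 := by
      rw [euclNorm_smul', abs_of_pos (inv_pos.mpr hc), inv_mul_cancel₀ hc.ne']
    have hmem : euclNorm (M.mulVec (c⁻¹ • v)) ∈
        {r : ℝ | ∃ x : κ → ℝ, euclNorm x = 1 ∧ r = euclNorm (M.mulVec x)} :=
      ⟨c⁻¹ • v, hunit, rfl⟩
    have hle := csInf_le ⟨0, by rintro r ⟨x, _, rfl⟩; exact euclNorm_nonneg' _⟩ hmem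
    have heq : euclNorm (M.mulVec (c⁻¹ • v)) = c⁻¹ * euclNorm (M.mulVec v) := by
      rw [Matrix.mulVec_smul, euclNorm_smul', abs_of_pos (inv_pos.mpr hc)]
    rw [heq] at hle
    calc sigmaMin M * c ≤ (c⁻¹ * euclNorm (M.mulVec v)) * c :=
          mul_le_mul_of_nonneg_right hle hc.le
      _ = euclNorm (M.mulVec v) := by field_simp

/-- Schur-product lower bound: if `A ∈ ℝ^{k²×k}` has `i`-th column `vec(uᵢuᵢᵀ)` for the
columns `uᵢ` of `U ∈ ℝ^{k×k}`, then `σ_k(A) ≥ σ_k(U)²` and `‖A‖ ≤ σ_1(U)²`. -/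
theorem stmt16 (k : ℕ) (U : Matrix (Fin k) (Fin k) ℝ)
    (A : Matrix (Fin k × Fin k) (Fin k) ℝ)
    (hA : ∀ i j l : Fin k, A (i, j) l = U i l * U j l) :
    sigmaMin U ^ 2 ≤ sigmaMin A ∧ specNorm A ≤ specNorm U ^ 2 := by
  rcases Nat.eq_zero_or_pos k with hk | hk
  · subst hk
    have hempty : ∀ {ι : Type} [Fintype ι] (M : Matrix ι (Fin 0) ℝ),
        {r : ℝ | ∃ x : Fin 0 → ℝ, euclNorm x = 1 ∧ r = euclNorm (M.mulVec x)} = ∅ := by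
      intro ι _ M
      ext r
      simp only [Set.mem_setOf_eq, Set.mem_empty_iff_false, iff_false, not_exists]
      rintro x ⟨hx, -⟩
      have : euclNorm x = 0 := by simp [euclNorm]
      rw [this] at hx; norm_num at hx
    rw [show sigmaMin U = 0 by rw [sigmaMin, hempty, Real.sInf_empty],
        show sigmaMin A = 0 by rw [sigmaMin, hempty, Real.sInf_empty],
        show specNorm U = 0 by rw [specNorm, hempty, Real.sSup_empty],
        show specNorm A = 0 by rw [specNorm, hempty, Real.sSup_empty]]
    norm_num
  · set j0 : Fin k := ⟨0, hk⟩
    set s := sigmaMin U with hsdef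
    set S := specNorm U with hSdef
    have hs0 : 0 ≤ s := Real.sInf_nonneg (by rintro r ⟨x, _, rfl⟩; exact euclNorm_nonneg' _)
    have hS0 : 0 ≤ S := Real.sSup_nonneg (by rintro r ⟨x, _, rfl⟩; exact euclNorm_nonneg' _)
    have hUe : ∀ l : Fin k, euclNorm (U.mulVec (Pi.single l 1)) ^ 2 = ∑ i, (U i l)^2 := by
      intro l
      rw [euclNorm_sq']
      simp [Matrix.mulVec_single]
    have hlo : ∀ l : Fin k, s^2 ≤ ∑ i, (U i l)^2 := by
      intro l
      rw [← hUe l]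
      have h := sigmaMin_le_mulVec U (Pi.single l 1)
      rw [euclNorm_single', mul_one] at h
      exact pow_le_pow_left₀ hs0 h 2
    have hhi : ∀ l : Fin k, ∑ i, (U i l)^2 ≤ S^2 := by
      intro l
      rw [← hUe l]
      have h := mulVec_le_specNorm U (Pi.single l 1)
      rw [euclNorm_single', mul_one] at h
      exact pow_le_pow_left₀ (euclNorm_nonneg' _) h 2
    have hkey : ∀ x : Fin k → ℝ,
        euclNorm (A.mulVec x)^2 = ∑ j, euclNorm (U.mulVec (fun l => x l * U j l))^2 := by
      intro x
      rw [euclNorm_sq', Fintype.sum_prod_type, Finset.sum_comm]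
      refine Finset.sum_congr rfl fun j _ => ?_
      rw [euclNorm_sq']
      refine Finset.sum_congr rfl fun i _ => ?_
      congr 1
      show A.mulVec x (i, j) = U.mulVec (fun l => x l * U j l) i
      simp only [Matrix.mulVec, dotProduct, hA]
      exact Finset.sum_congr rfl fun l _ => by ring
    have hwsq : ∀ (x : Fin k → ℝ) (j : Fin k),
        euclNorm (fun l => x l * U j l)^2 = ∑ l, (x l)^2 * (U j l)^2 := by
      intro x j
      rw [euclNorm_sq']
      exact Finset.sum_congr rfl fun l _ => by ring
    have hsumswap : ∀ x : Fin k → ℝ,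
        (∑ j, ∑ l, (x l)^2 * (U j l)^2) = ∑ l, (x l)^2 * ∑ i, (U i l)^2 := by
      intro x
      rw [Finset.sum_comm]
      exact Finset.sum_congr rfl fun l _ => by rw [Finset.mul_sum]
    have hne : Set.Nonempty {r : ℝ | ∃ x : Fin k → ℝ, euclNorm x = 1 ∧ r = euclNorm (A.mulVec x)} :=
      ⟨euclNorm (A.mulVec (Pi.single j0 1)), Pi.single j0 1, euclNorm_single' j0, rfl⟩
    constructor
    · -- lower bound
      apply le_csInf hne
      rintro r ⟨x, hx, rfl⟩
      have hx2 : ∑ l, (x l)^2 = 1 := by rw [← euclNorm_sq', hx, one_pow]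
      have h1 : (s^2)^2 ≤ euclNorm (A.mulVec x)^2 := by
        rw [hkey x]
        calc (s^2)^2 = ∑ l, (x l)^2 * s^2 * s^2 := by
              rw [← Finset.sum_mul, ← Finset.sum_mul, hx2]; ring
          _ ≤ ∑ l, (x l)^2 * (∑ i, (U i l)^2) * s^2 := by
              refine Finset.sum_le_sum fun l _ => ?_
              have := mul_le_mul_of_nonneg_left (hlo l) (sq_nonneg (x l))
              exact mul_le_mul_of_nonneg_right this (sq_nonneg s)
          _ = s^2 * ∑ l, (x l)^2 * ∑ i, (U i l)^2 := by
              rw [Finset.mul_sum]; exact Finset.sum_congr rfl fun l _ => by ring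
          _ = s^2 * ∑ j, ∑ l, (x l)^2 * (U j l)^2 := by rw [hsumswap x]
          _ = ∑ j, (s * euclNorm (fun l => x l * U j l))^2 := by
              rw [Finset.mul_sum]
              exact Finset.sum_congr rfl fun j _ => by rw [mul_pow, hwsq x j]
          _ ≤ ∑ j, euclNorm (U.mulVec (fun l => x l * U j l))^2 := by
              refine Finset.sum_le_sum fun j _ => ?_
              exact pow_le_pow_left₀ (mul_nonneg hs0 (euclNorm_nonneg' _))
                (sigmaMin_le_mulVec U _) 2
      have := Real.sqrt_le_sqrt h1
      rwa [Real.sqrt_sq (sq_nonneg s), Real.sqrt_sq (euclNorm_nonneg' _)] at this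
    · -- upper bound
      apply csSup_le hne
      rintro r ⟨x, hx, rfl⟩
      have hx2 : ∑ l, (x l)^2 = 1 := by rw [← euclNorm_sq', hx, one_pow]
      have h1 : euclNorm (A.mulVec x)^2 ≤ (S^2)^2 := by
        rw [hkey x]
        calc (∑ j, euclNorm (U.mulVec (fun l => x l * U j l))^2)
            ≤ ∑ j, (S * euclNorm (fun l => x l * U j l))^2 := by
              refine Finset.sum_le_sum fun j _ => ?_
              exact pow_le_pow_left₀ (euclNorm_nonneg' _) (mulVec_le_specNorm U _) 2
          _ = S^2 * ∑ j, ∑ l, (x l)^2 * (U j l)^2 := by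
              rw [Finset.mul_sum]
              exact Finset.sum_congr rfl fun j _ => by rw [mul_pow, hwsq x j]
          _ = S^2 * ∑ l, (x l)^2 * ∑ i, (U i l)^2 := by rw [hsumswap x]
          _ ≤ S^2 * ∑ l, (x l)^2 * S^2 := by
              refine mul_le_mul_of_nonneg_left (Finset.sum_le_sum fun l _ => ?_) (sq_nonneg S)
              exact mul_le_mul_of_nonneg_left (hhi l) (sq_nonneg (x l))
          _ = (S^2)^2 := by rw [← Finset.sum_mul, hx2]; ring
      have := Real.sqrt_le_sqrt h1
      rwa [Real.sqrt_sq (sq_nonneg S), Real.sqrt_sq (euclNorm_nonneg' _)] at this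
end
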